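/- arXiv:2103.01473 — 2 statements merged into one kernel-verified Lean document; each statement's English description precedes it below -/
import Mathlib

section
/- Suppose cos θ0 = sin θ0 · sin θ1 and cos θ1 ≠ 0. Then the open quantum walk is ballistic: the sequence σ(t)/t converges, as t → ∞, to s0²·|c1|·√(1 + 3·s1² − (2p − 1)²·c1²), where c0 = cos θ0, s0 = sin θ0, c1 = cos θ1, s1 = sin θ1. -/
open Matrix Complex Filter

/-- Local operation `P(θ0,θ1)`. -/
noncomputable def Pmat (θ0 θ1 : ℝ) : Matrix (Fin 2) (Fin 2) ℂ :=
  !![0, (Real.cos θ0 : ℂ);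
     ((Real.sin θ0 * Real.sin θ1 : ℝ) : ℂ), (-((Real.sin θ0 * Real.cos θ1 : ℝ) : ℂ))]

/-- Local operation `Q(θ0,θ1)`. -/
noncomputable def Qmat (θ0 θ1 : ℝ) : Matrix (Fin 2) (Fin 2) ℂ :=
  !![((Real.sin θ0 * Real.cos θ1 : ℝ) : ℂ), ((Real.sin θ0 * Real.sin θ1 : ℝ) : ℂ);
     (Real.cos θ0 : ℂ), 0]

/-- The open quantum walk on ℤ with initial state `diagonal (p, 1-p)` at the origin. -/
noncomputable def owalk (θ0 θ1 p : ℝ) : ℕ → ℤ → Matrix (Fin 2) (Fin 2) ℂ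
  | 0, x => if x = 0 then Matrix.diagonal ![(p : ℂ), ((1 - p : ℝ) : ℂ)] else 0
  | t + 1, x =>
      Pmat θ0 θ1 * owalk θ0 θ1 p t (x + 1) * (Pmat θ0 θ1)ᴴ
        + Qmat θ0 θ1 * owalk θ0 θ1 p t (x - 1) * (Qmat θ0 θ1)ᴴ

/-- Finding probability at position `x` at time `t`. -/
noncomputable def findprob (θ0 θ1 p : ℝ) (t : ℕ) (x : ℤ) : ℝ :=
  ((owalk θ0 θ1 p t x).trace).re

/-- First moment (finite sum: the walk vanishes outside `[-t, t]`). -/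
noncomputable def moment1 (θ0 θ1 p : ℝ) (t : ℕ) : ℝ :=
  ∑ x ∈ Finset.Icc (-(t : ℤ)) (t : ℤ), (x : ℝ) * findprob θ0 θ1 p t x

/-- Second moment. -/
noncomputable def moment2 (θ0 θ1 p : ℝ) (t : ℕ) : ℝ :=
  ∑ x ∈ Finset.Icc (-(t : ℤ)) (t : ℤ), (x : ℝ) ^ 2 * findprob θ0 θ1 p t x

/-- Standard deviation. -/
noncomputable def stdDev (θ0 θ1 p : ℝ) (t : ℕ) : ℝ :=
  Real.sqrt (moment2 θ0 θ1 p t - (moment1 θ0 θ1 p t) ^ 2)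

noncomputable def Wmat (θ0 θ1 : ℝ) : Matrix (Fin 2) (Fin 2) ℂ :=
  !![((Real.sin θ0 ^ 2 * Real.cos θ1 ^ 2 : ℝ) : ℂ),
     ((2 * (Real.sin θ0 ^ 2 * (Real.sin θ1 * Real.cos θ1)) : ℝ) : ℂ);
     ((2 * (Real.sin θ0 ^ 2 * (Real.sin θ1 * Real.cos θ1)) : ℝ) : ℂ),
     (-((Real.sin θ0 ^ 2 * Real.cos θ1 ^ 2 : ℝ) : ℂ))]

lemma owalk_zero' (θ0 θ1 p : ℝ) (x : ℤ) :
    owalk θ0 θ1 p 0 x = if x = 0 then Matrix.diagonal ![(p : ℂ), ((1 - p : ℝ) : ℂ)] else 0 := rfl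

lemma owalk_succ' (θ0 θ1 p : ℝ) (t : ℕ) (x : ℤ) :
    owalk θ0 θ1 p (t+1) x = Pmat θ0 θ1 * owalk θ0 θ1 p t (x + 1) * (Pmat θ0 θ1)ᴴ
        + Qmat θ0 θ1 * owalk θ0 θ1 p t (x - 1) * (Qmat θ0 θ1)ᴴ := rfl

lemma owalk_support (θ0 θ1 p : ℝ) : ∀ (t : ℕ) (x : ℤ), ((t:ℤ) < x ∨ x < -(t:ℤ)) →
    owalk θ0 θ1 p t x = 0 := by
  intro t
  induction t with
  | zero =>
    intro x hx
    rw [owalk_zero', if_neg (by omega)]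
  | succ t ih =>
    intro x hx
    rw [owalk_succ', ih (x+1) (by push_cast at hx ⊢; omega), ih (x-1) (by push_cast at hx ⊢; omega)]
    simp

noncomputable def oqsum (θ0 θ1 p : ℝ) (A : Matrix (Fin 2) (Fin 2) ℂ) (f : ℤ → ℂ) (t : ℕ) : ℂ :=
  ∑ x ∈ Finset.Icc (-(t : ℤ)) (t : ℤ), f x * (A * owalk θ0 θ1 p t x).trace

lemma shift_sum (θ0 θ1 p : ℝ) (t : ℕ) (c : ℤ) (hc : c = 1 ∨ c = -1)
    (g : ℤ → Matrix (Fin 2) (Fin 2) ℂ → ℂ) (hg : ∀ y, g y 0 = 0) :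
    ∑ x ∈ Finset.Icc (-(t:ℤ) - 1) ((t:ℤ) + 1), g (x + c) (owalk θ0 θ1 p t (x + c))
      = ∑ y ∈ Finset.Icc (-(t:ℤ)) ((t:ℤ)), g y (owalk θ0 θ1 p t y) := by
  have h1 : ∑ x ∈ Finset.Icc (-(t:ℤ) - 1) ((t:ℤ) + 1), g (x + c) (owalk θ0 θ1 p t (x + c))
      = ∑ y ∈ Finset.Icc (-(t:ℤ) - 1 + c) ((t:ℤ) + 1 + c), g y (owalk θ0 θ1 p t y) := by
    rw [← Finset.map_add_right_Icc, Finset.sum_map]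
    rfl
  rw [h1]
  refine (Finset.sum_subset (by rcases hc with rfl | rfl <;> (intro z hz; simp at hz ⊢; omega)) ?_).symm
  intro y hy hy'
  rw [owalk_support θ0 θ1 p t y (by simp at hy hy'; omega), hg]

lemma oqsum_succ (θ0 θ1 p : ℝ) (A : Matrix (Fin 2) (Fin 2) ℂ) (f : ℤ → ℂ) (t : ℕ) :
    oqsum θ0 θ1 p A f (t+1)
      = oqsum θ0 θ1 p ((Pmat θ0 θ1)ᴴ * A * Pmat θ0 θ1) (fun y => f (y-1)) t
        + oqsum θ0 θ1 p ((Qmat θ0 θ1)ᴴ * A * Qmat θ0 θ1) (fun y => f (y+1)) t := by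
  have cyc : ∀ (B M : Matrix (Fin 2) (Fin 2) ℂ),
      (A * (B * M * Bᴴ)).trace = ((Bᴴ * A * B) * M).trace := by
    intro B M
    rw [show A * (B * M * Bᴴ) = (A * (B * M)) * Bᴴ by simp only [mul_assoc],
      Matrix.trace_mul_comm, mul_assoc, mul_assoc]
  unfold oqsum
  have hb : (-(↑(t+1) : ℤ)) = -(t:ℤ) - 1 := by push_cast; ring
  have hb2 : ((↑(t+1) : ℤ)) = (t:ℤ) + 1 := by push_cast; ring
  rw [hb, hb2]
  have : ∀ x ∈ Finset.Icc (-(t:ℤ) - 1) ((t:ℤ) + 1),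
      f x * (A * owalk θ0 θ1 p (t+1) x).trace
      = (fun y M => f (y - 1) * (((Pmat θ0 θ1)ᴴ * A * Pmat θ0 θ1) * M).trace) (x+1) (owalk θ0 θ1 p t (x+1))
        + (fun y M => f (y + 1) * (((Qmat θ0 θ1)ᴴ * A * Qmat θ0 θ1) * M).trace) (x-1) (owalk θ0 θ1 p t (x-1)) := by
    intro x _
    rw [owalk_succ', Matrix.mul_add, Matrix.trace_add, mul_add, cyc, cyc]
    simp
  rw [Finset.sum_congr rfl this, Finset.sum_add_distrib]
  congr 1
  · exact shift_sum θ0 θ1 p t 1 (Or.inl rfl)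
      (fun y M => f (y - 1) * (((Pmat θ0 θ1)ᴴ * A * Pmat θ0 θ1) * M).trace) (by intro y; simp)
  · have := shift_sum θ0 θ1 p t (-1) (Or.inr rfl)
      (fun y M => f (y + 1) * (((Qmat θ0 θ1)ᴴ * A * Qmat θ0 θ1) * M).trace) (by intro y; simp)
    simp only [show ∀ (x:ℤ), x + (-1) = x - 1 from fun x => by ring] at this
    exact this


noncomputable def alphaOW (θ0 θ1 : ℝ) : ℝ :=
  Real.sin θ0 ^ 4 * Real.cos θ1 ^ 2 * (1 + 3 * Real.sin θ1 ^ 2)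

section identities
variable (θ0 θ1 : ℝ)

lemma pyth0c : ((Real.sin θ0 : ℂ))^2 + ((Real.cos θ0 : ℂ))^2 = 1 := by
  exact_mod_cast congrArg (Complex.ofReal) (Real.sin_sq_add_cos_sq θ0)

lemma idI : (Pmat θ0 θ1)ᴴ * Pmat θ0 θ1 + (Qmat θ0 θ1)ᴴ * Qmat θ0 θ1 = 1 := by
  have h0 := pyth0c θ0
  have h1 := pyth0c θ1
  ext i j
  fin_cases i <;> fin_cases j <;>
    simp [Pmat, Qmat, Matrix.mul_apply, Fin.sum_univ_two, Matrix.conjTranspose_apply,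
      Matrix.one_apply, Complex.star_def, _root_.map_mul, map_neg, Complex.conj_ofReal,
      Complex.ofReal_mul, Complex.ofReal_pow, Complex.ofReal_ofNat,
      -Complex.ofReal_sin, -Complex.ofReal_cos] <;>
    set c0 := (Real.cos θ0 : ℂ) <;> set s0 := (Real.sin θ0 : ℂ) <;>
    set c1 := (Real.cos θ1 : ℂ) <;> set s1 := (Real.sin θ1 : ℂ)
  · linear_combination h0 + s0^2*h1
  · ring
  · ring
  · linear_combination h0 + s0^2*h1

end identities
section identities2
variable (θ0 θ1 : ℝ)

lemma hhc (h : Real.cos θ0 = Real.sin θ0 * Real.sin θ1) : ((Real.cos θ0 : ℂ)) = (Real.sin θ0 : ℂ) * (Real.sin θ1 : ℂ) := by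
  exact_mod_cast congrArg (Complex.ofReal) h

lemma idW (h : Real.cos θ0 = Real.sin θ0 * Real.sin θ1) : (Qmat θ0 θ1)ᴴ * Qmat θ0 θ1 - (Pmat θ0 θ1)ᴴ * Pmat θ0 θ1 = Wmat θ0 θ1 := by
  have hh := hhc θ0 θ1 h
  have h0 := pyth0c θ0
  have h1 := pyth0c θ1
  ext i j
  fin_cases i <;> fin_cases j <;>
    simp [Pmat, Qmat, Wmat, Matrix.mul_apply, Fin.sum_univ_two, Matrix.conjTranspose_apply,
      Matrix.one_apply, Complex.star_def, _root_.map_mul, map_neg, Complex.conj_ofReal,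
      Complex.ofReal_mul, Complex.ofReal_pow, Complex.ofReal_ofNat,
      -Complex.ofReal_sin, -Complex.ofReal_cos] <;>
    set c0 := (Real.cos θ0 : ℂ) <;> set s0 := (Real.sin θ0 : ℂ) <;>
    set c1 := (Real.cos θ1 : ℂ) <;> set s1 := (Real.sin θ1 : ℂ)
  · linear_combination (c0 + s0*s1) * hh
  · ring
  · ring
  · linear_combination (-(c0 + s0*s1)) * hh

lemma idII (h : Real.cos θ0 = Real.sin θ0 * Real.sin θ1) : (Pmat θ0 θ1)ᴴ * Wmat θ0 θ1 * Pmat θ0 θ1 + (Qmat θ0 θ1)ᴴ * Wmat θ0 θ1 * Qmat θ0 θ1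
    = Wmat θ0 θ1 := by
  have hh := hhc θ0 θ1 h
  have h0 := pyth0c θ0
  have h1 := pyth0c θ1
  ext i j
  fin_cases i <;> fin_cases j <;>
    simp [Pmat, Qmat, Wmat, Matrix.mul_apply, Fin.sum_univ_two, Matrix.conjTranspose_apply,
      Matrix.one_apply, Complex.star_def, _root_.map_mul, map_neg, Complex.conj_ofReal,
      Complex.ofReal_mul, Complex.ofReal_pow, Complex.ofReal_ofNat,
      -Complex.ofReal_sin, -Complex.ofReal_cos] <;>
    set c0 := (Real.cos θ0 : ℂ) <;> set s0 := (Real.sin θ0 : ℂ) <;>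
    set c1 := (Real.cos θ1 : ℂ) <;> set s1 := (Real.sin θ1 : ℂ)
  · linear_combination ((-c0*s0^2*c1^2 + 3*s0^3*s1*c1^2) - (-s0^2*s1^2 + s0^2)*(c0 + s0*s1)) * hh
      + (-s0^2*s1^2 + s0^2) * h0 + (s0^4*s1^2 + s0^4*c1^2 + s0^4 - s0^2) * h1
  · linear_combination (4*s0^3*s1^2*c1 - 2*s0^2*s1*c1*(c0 + s0*s1)) * hh
      + (2*s0^2*s1*c1) * h0 + (2*s0^4*s1*c1) * h1
  · linear_combination (4*s0^3*s1^2*c1 - 2*s0^2*s1*c1*(c0 + s0*s1)) * hh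
      + (2*s0^2*s1*c1) * h0 + (2*s0^4*s1*c1) * h1
  · linear_combination (-((-c0*s0^2*c1^2 + 3*s0^3*s1*c1^2) - (-s0^2*s1^2 + s0^2)*(c0 + s0*s1))) * hh
      + (-(-s0^2*s1^2 + s0^2)) * h0 + (-(s0^4*s1^2 + s0^4*c1^2 + s0^4 - s0^2)) * h1

lemma idIII (h : Real.cos θ0 = Real.sin θ0 * Real.sin θ1) : (Qmat θ0 θ1)ᴴ * Wmat θ0 θ1 * Qmat θ0 θ1 - (Pmat θ0 θ1)ᴴ * Wmat θ0 θ1 * Pmat θ0 θ1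
    = (alphaOW θ0 θ1 : ℂ) • 1 := by
  have hh := hhc θ0 θ1 h
  have h0 := pyth0c θ0
  have h1 := pyth0c θ1
  ext i j
  fin_cases i <;> fin_cases j <;>
    simp [Pmat, Qmat, Wmat, alphaOW, Matrix.mul_apply, Fin.sum_univ_two,
      Matrix.conjTranspose_apply, Matrix.smul_apply, smul_eq_mul,
      Matrix.one_apply, Complex.star_def, _root_.map_mul, map_neg, Complex.conj_ofReal,
      Complex.ofReal_mul, Complex.ofReal_pow, Complex.ofReal_ofNat, Complex.ofReal_add,
      Complex.ofReal_one,
      -Complex.ofReal_sin, -Complex.ofReal_cos] <;>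
    set c0 := (Real.cos θ0 : ℂ) <;> set s0 := (Real.sin θ0 : ℂ) <;>
    set c1 := (Real.cos θ1 : ℂ) <;> set s1 := (Real.sin θ1 : ℂ)
  · linear_combination (-c0*s0^2*c1^2 + 3*s0^3*s1*c1^2) * hh + (s0^4*c1^2) * h1
  · ring
  · ring
  · linear_combination (-c0*s0^2*c1^2 + 3*s0^3*s1*c1^2) * hh + (s0^4*c1^2) * h1

end identities2


section base
variable (θ0 θ1 p : ℝ)

lemma oqsum_zero (A : Matrix (Fin 2) (Fin 2) ℂ) (f : ℤ → ℂ) :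
    oqsum θ0 θ1 p A f 0 = f 0 * (A * Matrix.diagonal ![(p : ℂ), ((1 - p : ℝ) : ℂ)]).trace := by
  simp [oqsum, owalk]

lemma base0 : oqsum θ0 θ1 p 1 (fun _ => 1) 0 = 1 := by
  rw [oqsum_zero]
  simp [Matrix.trace_fin_two, Matrix.diagonal]

lemma baseW : oqsum θ0 θ1 p (Wmat θ0 θ1) (fun _ => 1) 0
    = (((2*p-1) * (Real.sin θ0 ^ 2 * Real.cos θ1 ^ 2) : ℝ) : ℂ) := by
  rw [oqsum_zero]
  simp [Wmat, Matrix.trace_fin_two, Matrix.mul_apply, Fin.sum_univ_two,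
    Matrix.diagonal_apply_eq, Matrix.diagonal_apply_ne, Matrix.vecMul_diagonal]
  ring

end base

section steps
variable (θ0 θ1 p : ℝ)

lemma traceI (ρ : Matrix (Fin 2) (Fin 2) ℂ) :
    ((Pmat θ0 θ1)ᴴ * Pmat θ0 θ1 * ρ).trace + ((Qmat θ0 θ1)ᴴ * Qmat θ0 θ1 * ρ).trace
      = ((1 : Matrix (Fin 2) (Fin 2) ℂ) * ρ).trace := by
  rw [← Matrix.trace_add, ← Matrix.add_mul, idI]

lemma traceW (h : Real.cos θ0 = Real.sin θ0 * Real.sin θ1) (ρ : Matrix (Fin 2) (Fin 2) ℂ) :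
    ((Qmat θ0 θ1)ᴴ * Qmat θ0 θ1 * ρ).trace - ((Pmat θ0 θ1)ᴴ * Pmat θ0 θ1 * ρ).trace
      = (Wmat θ0 θ1 * ρ).trace := by
  rw [← Matrix.trace_sub, ← Matrix.sub_mul, idW θ0 θ1 h]

lemma traceII (h : Real.cos θ0 = Real.sin θ0 * Real.sin θ1) (ρ : Matrix (Fin 2) (Fin 2) ℂ) :
    ((Pmat θ0 θ1)ᴴ * Wmat θ0 θ1 * Pmat θ0 θ1 * ρ).trace
      + ((Qmat θ0 θ1)ᴴ * Wmat θ0 θ1 * Qmat θ0 θ1 * ρ).trace = (Wmat θ0 θ1 * ρ).trace := by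
  rw [← Matrix.trace_add, ← Matrix.add_mul, idII θ0 θ1 h]

lemma traceIII (h : Real.cos θ0 = Real.sin θ0 * Real.sin θ1) (ρ : Matrix (Fin 2) (Fin 2) ℂ) :
    ((Qmat θ0 θ1)ᴴ * Wmat θ0 θ1 * Qmat θ0 θ1 * ρ).trace
      - ((Pmat θ0 θ1)ᴴ * Wmat θ0 θ1 * Pmat θ0 θ1 * ρ).trace
      = (alphaOW θ0 θ1 : ℂ) * ((1 : Matrix (Fin 2) (Fin 2) ℂ) * ρ).trace := by
  rw [← Matrix.trace_sub, ← Matrix.sub_mul, idIII θ0 θ1 h, Matrix.smul_mul, Matrix.trace_smul,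
    smul_eq_mul]

lemma step0 (t : ℕ) : oqsum θ0 θ1 p 1 (fun _ => 1) (t+1) = oqsum θ0 θ1 p 1 (fun _ => 1) t := by
  rw [oqsum_succ]
  simp only [Matrix.mul_one, oqsum, ← Finset.sum_add_distrib]
  refine Finset.sum_congr rfl fun x _ => ?_
  have e1 := traceI θ0 θ1 (owalk θ0 θ1 p t x)
  linear_combination e1

lemma stepW (h : Real.cos θ0 = Real.sin θ0 * Real.sin θ1) (t : ℕ) : oqsum θ0 θ1 p (Wmat θ0 θ1) (fun _ => 1) (t+1)
    = oqsum θ0 θ1 p (Wmat θ0 θ1) (fun _ => 1) t := by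
  rw [oqsum_succ]
  simp only [oqsum, ← Finset.sum_add_distrib]
  refine Finset.sum_congr rfl fun x _ => ?_
  have e1 := traceII θ0 θ1 h (owalk θ0 θ1 p t x)
  linear_combination e1

lemma step1 (h : Real.cos θ0 = Real.sin θ0 * Real.sin θ1) (t : ℕ) : oqsum θ0 θ1 p 1 (fun x => (x : ℂ)) (t+1)
    = oqsum θ0 θ1 p 1 (fun x => (x : ℂ)) t + oqsum θ0 θ1 p (Wmat θ0 θ1) (fun _ => 1) t := by
  rw [oqsum_succ]
  simp only [Matrix.mul_one, oqsum, ← Finset.sum_add_distrib]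
  refine Finset.sum_congr rfl fun x _ => ?_
  have e1 := traceI θ0 θ1 (owalk θ0 θ1 p t x)
  have e2 := traceW θ0 θ1 h (owalk θ0 θ1 p t x)
  push_cast
  linear_combination (x : ℂ) * e1 + e2

lemma stepTW (h : Real.cos θ0 = Real.sin θ0 * Real.sin θ1) (t : ℕ) : oqsum θ0 θ1 p (Wmat θ0 θ1) (fun x => (x : ℂ)) (t+1)
    = oqsum θ0 θ1 p (Wmat θ0 θ1) (fun x => (x : ℂ)) t
      + (alphaOW θ0 θ1 : ℂ) * oqsum θ0 θ1 p 1 (fun _ => 1) t := by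
  rw [oqsum_succ]
  simp only [oqsum, Finset.mul_sum, ← Finset.sum_add_distrib]
  refine Finset.sum_congr rfl fun x _ => ?_
  have e1 := traceII θ0 θ1 h (owalk θ0 θ1 p t x)
  have e2 := traceIII θ0 θ1 h (owalk θ0 θ1 p t x)
  push_cast
  linear_combination (x : ℂ) * e1 + e2

lemma step2 (h : Real.cos θ0 = Real.sin θ0 * Real.sin θ1) (t : ℕ) : oqsum θ0 θ1 p 1 (fun x => (x : ℂ)^2) (t+1)
    = oqsum θ0 θ1 p 1 (fun x => (x : ℂ)^2) t
      + 2 * oqsum θ0 θ1 p (Wmat θ0 θ1) (fun x => (x : ℂ)) t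
      + oqsum θ0 θ1 p 1 (fun _ => 1) t := by
  rw [oqsum_succ]
  simp only [Matrix.mul_one, oqsum, Finset.mul_sum, ← Finset.sum_add_distrib]
  refine Finset.sum_congr rfl fun x _ => ?_
  have e1 := traceI θ0 θ1 (owalk θ0 θ1 p t x)
  have e2 := traceW θ0 θ1 h (owalk θ0 θ1 p t x)
  push_cast
  linear_combination ((x : ℂ)^2 + 1) * e1 + 2 * (x : ℂ) * e2

lemma cl0 (t : ℕ) : oqsum θ0 θ1 p 1 (fun _ => 1) t = 1 := by
  induction t with
  | zero => exact base0 θ0 θ1 p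
  | succ t ih => rw [step0, ih]

lemma clW (h : Real.cos θ0 = Real.sin θ0 * Real.sin θ1) (t : ℕ) : oqsum θ0 θ1 p (Wmat θ0 θ1) (fun _ => 1) t
    = (((2*p-1) * (Real.sin θ0 ^ 2 * Real.cos θ1 ^ 2) : ℝ) : ℂ) := by
  induction t with
  | zero => exact baseW θ0 θ1 p
  | succ t ih => rw [stepW θ0 θ1 p h, ih]

lemma cl1 (h : Real.cos θ0 = Real.sin θ0 * Real.sin θ1) (t : ℕ) : oqsum θ0 θ1 p 1 (fun x => (x : ℂ)) t
    = (((2*p-1) * (Real.sin θ0 ^ 2 * Real.cos θ1 ^ 2) : ℝ) : ℂ) * t := by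
  induction t with
  | zero => rw [oqsum_zero]; simp
  | succ t ih =>
      rw [step1 θ0 θ1 p h, ih, clW θ0 θ1 p h]
      push_cast
      ring

lemma clTW (h : Real.cos θ0 = Real.sin θ0 * Real.sin θ1) (t : ℕ) : oqsum θ0 θ1 p (Wmat θ0 θ1) (fun x => (x : ℂ)) t
    = (alphaOW θ0 θ1 : ℂ) * t := by
  induction t with
  | zero => rw [oqsum_zero]; simp
  | succ t ih =>
      rw [stepTW θ0 θ1 p h, ih, cl0]
      push_cast
      ring

lemma cl2 (h : Real.cos θ0 = Real.sin θ0 * Real.sin θ1) (t : ℕ) : oqsum θ0 θ1 p 1 (fun x => (x : ℂ)^2) t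
    = (alphaOW θ0 θ1 : ℂ) * t^2 + (1 - (alphaOW θ0 θ1 : ℂ)) * t := by
  induction t with
  | zero => rw [oqsum_zero]; simp
  | succ t ih =>
      rw [step2 θ0 θ1 p h, ih, clTW θ0 θ1 p h, cl0]
      push_cast
      ring

end steps

section moments
variable (θ0 θ1 p : ℝ)

lemma moment1_eq (h : Real.cos θ0 = Real.sin θ0 * Real.sin θ1) (t : ℕ) :
    moment1 θ0 θ1 p t = (2*p-1) * (Real.sin θ0 ^ 2 * Real.cos θ1 ^ 2) * t := by
  have hre : moment1 θ0 θ1 p t = (oqsum θ0 θ1 p 1 (fun x => (x : ℂ)) t).re := by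
    unfold moment1 findprob oqsum
    rw [Complex.re_sum]
    refine Finset.sum_congr rfl fun x _ => ?_
    beta_reduce
    rw [Matrix.one_mul, show ((x : ℤ) : ℂ) = (((x : ℤ) : ℝ) : ℂ) by push_cast; ring,
      Complex.re_ofReal_mul]
  rw [hre, cl1 θ0 θ1 p h t,
    show ((t : ℕ) : ℂ) = (((t : ℕ) : ℝ) : ℂ) by push_cast; ring,
    ← Complex.ofReal_mul, Complex.ofReal_re]

lemma moment2_eq (h : Real.cos θ0 = Real.sin θ0 * Real.sin θ1) (t : ℕ) :
    moment2 θ0 θ1 p t = alphaOW θ0 θ1 * t^2 + (1 - alphaOW θ0 θ1) * t := by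
  have hre : moment2 θ0 θ1 p t = (oqsum θ0 θ1 p 1 (fun x => (x : ℂ)^2) t).re := by
    unfold moment2 findprob oqsum
    rw [Complex.re_sum]
    refine Finset.sum_congr rfl fun x _ => ?_
    beta_reduce
    rw [Matrix.one_mul, show ((x : ℤ) : ℂ)^2 = ((((x : ℤ) : ℝ)^2 : ℝ) : ℂ) by push_cast; ring,
      Complex.re_ofReal_mul]
  rw [hre, cl2 θ0 θ1 p h t,
    show ((alphaOW θ0 θ1 : ℝ) : ℂ) * (t : ℂ)^2 + (1 - ((alphaOW θ0 θ1 : ℝ) : ℂ)) * (t : ℂ)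
        = ((alphaOW θ0 θ1 * t^2 + (1 - alphaOW θ0 θ1) * t : ℝ) : ℂ) by push_cast; ring,
    Complex.ofReal_re]

end moments


theorem owalk_ballistic (θ0 θ1 p : ℝ) (hp0 : 0 ≤ p) (hp1 : p ≤ 1)
    (h : Real.cos θ0 = Real.sin θ0 * Real.sin θ1) (hc1 : Real.cos θ1 ≠ 0) :
    Filter.Tendsto (fun t : ℕ => stdDev θ0 θ1 p t / (t : ℝ)) Filter.atTop
      (nhds (Real.sin θ0 ^ 2 * |Real.cos θ1| *
        Real.sqrt (1 + 3 * Real.sin θ1 ^ 2 - (2 * p - 1) ^ 2 * Real.cos θ1 ^ 2))) := by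
  set s0 := Real.sin θ0 with hs0def
  set c1 := Real.cos θ1 with hc1def
  set s1 := Real.sin θ1 with hs1def
  set a : ℝ := (2*p-1) * (s0 ^ 2 * c1 ^ 2) with ha
  set α : ℝ := alphaOW θ0 θ1 with hα
  set X : ℝ := 1 + 3 * s1 ^ 2 - (2 * p - 1) ^ 2 * c1 ^ 2 with hX
  have pyth0 := Real.sin_sq_add_cos_sq θ0
  have pyth1 := Real.sin_sq_add_cos_sq θ1
  have hs : s0 ^ 2 * (1 + s1 ^ 2) = 1 := by
    linear_combination pyth0 - (Real.cos θ0 + s0 * s1) * h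
  have h1mα : 1 - α = 4 * s0 ^ 4 * s1 ^ 4 := by
    rw [hα, alphaOW, ← hs0def, ← hc1def, ← hs1def]
    linear_combination (-(s0^2*s1^2) - s0^2 - 1) * hs + (-(3*s0^4*s1^2) - s0^4) * pyth1
  have h1mα' : 0 ≤ 1 - α := by rw [h1mα]; positivity
  have h2p : (2*p-1)^2 ≤ 1 := by nlinarith
  have hXnn : 0 ≤ X := by rw [hX]; nlinarith [sq_nonneg s1, sq_nonneg c1]
  have hαa : α - a^2 = s0^4 * c1^2 * X := by
    rw [hα, alphaOW, ← hs0def, ← hc1def, ← hs1def, ha, hX]; ring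
  have hαann : 0 ≤ α - a^2 := by rw [hαa]; positivity
  have hL : Real.sqrt (α - a^2) = s0 ^ 2 * |c1| * Real.sqrt X := by
    rw [hαa, show s0^4 * c1^2 = (s0^2*|c1|)^2 by rw [mul_pow, _root_.sq_abs]; ring,
      Real.sqrt_mul (sq_nonneg _), Real.sqrt_sq (by positivity)]
  -- limit of the model function
  have hdiv : Tendsto (fun t : ℕ => (1-α)/(t:ℝ)) atTop (nhds 0) :=
    tendsto_const_div_atTop_nhds_zero_nat _
  have hinner : Tendsto (fun t : ℕ => (α - a^2) + (1-α)/(t:ℝ)) atTop (nhds ((α - a^2) + 0)) :=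
    tendsto_const_nhds.add hdiv
  rw [add_zero] at hinner
  have hsq : Tendsto (fun t : ℕ => Real.sqrt ((α - a^2) + (1-α)/(t:ℝ))) atTop
      (nhds (Real.sqrt (α - a^2))) := (Real.continuous_sqrt.tendsto _).comp hinner
  rw [hL] at hsq
  refine Tendsto.congr' ?_ hsq
  filter_upwards [eventually_ge_atTop 1] with t ht
  have htpos : (0:ℝ) < t := by exact_mod_cast ht
  have hstd : stdDev θ0 θ1 p t = Real.sqrt ((α - a^2)*(t:ℝ)^2 + (1-α)*(t:ℝ)) := by
    rw [stdDev, moment2_eq θ0 θ1 p h t, moment1_eq θ0 θ1 p h t, ← hs0def, ← hc1def, ← hα, ← ha]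
    ring_nf
  have hinner_eq : (α - a^2)*(t:ℝ)^2 + (1-α)*(t:ℝ)
      = ((α - a^2) + (1-α)/(t:ℝ)) * (t:ℝ)^2 := by
    field_simp
  have hin_nn : 0 ≤ (α - a^2) + (1-α)/(t:ℝ) := by positivity
  rw [hstd, hinner_eq, Real.sqrt_mul hin_nn, Real.sqrt_sq htpos.le,
    mul_div_assoc, div_self htpos.ne', mul_one]
end

section
/- Suppose sin θ0 · cos θ1 = 0 and cos θ0 ≠ sin θ0 · sin θ1. Then for every t ∈ ℕ the second moment satisfies: E₂(t) = 4·c0²·s0²·t if t is even, and E₂(t) = 4·c0²·s0²·t + (2·c0² − 1)² if t is odd, where c0 = cos θ0 and s0 = sin θ0. -/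
open Matrix Complex Filter

lemma owalk_vanish (θ0 θ1 p : ℝ) : ∀ t : ℕ, ∀ x : ℤ, (t : ℤ) < |x| → owalk θ0 θ1 p t x = 0 := by
  intro t
  induction t with
  | zero =>
      intro x hx
      rw [owalk, if_neg]
      rcases abs_cases x with ⟨h,_⟩|⟨h,_⟩ <;> omega
  | succ t ih =>
      intro x hx
      have h1 : (t:ℤ) < |x+1| := by
        rcases abs_cases x with ⟨h,_⟩|⟨h,_⟩ <;> rcases abs_cases (x+1) with ⟨h2,_⟩|⟨h2,_⟩ <;> omega
      have h2 : (t:ℤ) < |x-1| := by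
        rcases abs_cases x with ⟨h,_⟩|⟨h,_⟩ <;> rcases abs_cases (x-1) with ⟨h2,_⟩|⟨h2,_⟩ <;> omega
      rw [owalk, ih (x+1) h1, ih (x-1) h2]
      simp

lemma entry00 (θ0 θ1 p : ℝ) (hs : Real.sin θ0 * Real.cos θ1 = 0) (t : ℕ) (x : ℤ) :
    owalk θ0 θ1 p (t+1) x 0 0
      = (Real.cos θ0 : ℂ)^2 * owalk θ0 θ1 p t (x+1) 1 1
        + ((Real.sin θ0 * Real.sin θ1 : ℝ) : ℂ)^2 * owalk θ0 θ1 p t (x-1) 1 1 := by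
  rw [owalk]
  simp [Pmat, Qmat, Matrix.mul_apply, Fin.sum_univ_two, Matrix.conjTranspose_apply, Matrix.vecMul, dotProduct, hs, ← Complex.ofReal_cos, ← Complex.ofReal_sin, Complex.conj_ofReal]
  ring

lemma entry11 (θ0 θ1 p : ℝ) (hs : Real.sin θ0 * Real.cos θ1 = 0) (t : ℕ) (x : ℤ) :
    owalk θ0 θ1 p (t+1) x 1 1
      = ((Real.sin θ0 * Real.sin θ1 : ℝ) : ℂ)^2 * owalk θ0 θ1 p t (x+1) 0 0
        + (Real.cos θ0 : ℂ)^2 * owalk θ0 θ1 p t (x-1) 0 0 := by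
  rw [owalk]
  simp [Pmat, Qmat, Matrix.mul_apply, Fin.sum_univ_two, Matrix.conjTranspose_apply, Matrix.vecMul, dotProduct, hs, ← Complex.ofReal_cos, ← Complex.ofReal_sin, Complex.conj_ofReal]
  ring

lemma sum_shift (t : ℕ) (f : ℤ → ℂ) (hf : ∀ x : ℤ, (t : ℤ) < |x| → f x = 0)
    (w : ℤ → ℂ) (c : ℤ) (hc1 : -1 ≤ c) (hc2 : c ≤ 1) :
    ∑ x ∈ Finset.Icc (-(t:ℤ)-1) ((t:ℤ)+1), w x * f (x + c)
      = ∑ x ∈ Finset.Icc (-(t:ℤ)) (t:ℤ), w (x - c) * f x := by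
  have hsub : Finset.Icc (-(t:ℤ)-c) ((t:ℤ)-c) ⊆ Finset.Icc (-(t:ℤ)-1) ((t:ℤ)+1) :=
    Finset.Icc_subset_Icc (by omega) (by omega)
  rw [← Finset.sum_subset hsub (by
    intro x hx hx'
    simp only [Finset.mem_Icc] at hx hx'
    rw [hf (x + c) (by rcases abs_cases (x+c) with ⟨h,_⟩|⟨h,_⟩ <;> omega), mul_zero])]
  have hmap : Finset.Icc (-(t:ℤ)) (t:ℤ)
      = Finset.map (addRightEmbedding c) (Finset.Icc (-(t:ℤ)-c) ((t:ℤ)-c)) := by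
    rw [Finset.map_add_right_Icc]; congr 1 <;> ring
  rw [hmap, Finset.sum_map]
  apply Finset.sum_congr rfl
  intro x hx
  simp [addRightEmbedding]

noncomputable def Ssum (θ0 θ1 p : ℝ) (k t : ℕ) : ℂ :=
  ∑ x ∈ Finset.Icc (-(t:ℤ)) (t:ℤ),
    (x:ℂ)^k * (owalk θ0 θ1 p t x 0 0 + owalk θ0 θ1 p t x 1 1)

noncomputable def Dsum (θ0 θ1 p : ℝ) (k t : ℕ) : ℂ :=
  ∑ x ∈ Finset.Icc (-(t:ℤ)) (t:ℤ),
    (x:ℂ)^k * (owalk θ0 θ1 p t x 0 0 - owalk θ0 θ1 p t x 1 1)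

lemma vanish00 (θ0 θ1 p : ℝ) (t : ℕ) : ∀ x : ℤ, (t : ℤ) < |x| → owalk θ0 θ1 p t x 1 1 = 0 := by
  intro x hx; rw [owalk_vanish θ0 θ1 p t x hx]; rfl

lemma vanish11 (θ0 θ1 p : ℝ) (t : ℕ) : ∀ x : ℤ, (t : ℤ) < |x| → owalk θ0 θ1 p t x 0 0 = 0 := by
  intro x hx; rw [owalk_vanish θ0 θ1 p t x hx]; rfl

lemma sum_rec00 (θ0 θ1 p : ℝ) (hs : Real.sin θ0 * Real.cos θ1 = 0) (t : ℕ) (w : ℤ → ℂ) :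
    ∑ x ∈ Finset.Icc (-(t:ℤ)-1) ((t:ℤ)+1), w x * owalk θ0 θ1 p (t+1) x 0 0
      = ∑ x ∈ Finset.Icc (-(t:ℤ)) (t:ℤ),
          ((Real.cos θ0 : ℂ)^2 * w (x-1) + ((Real.sin θ0 * Real.sin θ1 : ℝ) : ℂ)^2 * w (x+1))
            * owalk θ0 θ1 p t x 1 1 := by
  set a : ℂ := (Real.cos θ0 : ℂ)
  set b : ℂ := ((Real.sin θ0 * Real.sin θ1 : ℝ) : ℂ)
  calc ∑ x ∈ Finset.Icc (-(t:ℤ)-1) ((t:ℤ)+1), w x * owalk θ0 θ1 p (t+1) x 0 0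
      = ∑ x ∈ Finset.Icc (-(t:ℤ)-1) ((t:ℤ)+1),
          ((a^2 * w x) * owalk θ0 θ1 p t (x+1) 1 1 + (b^2 * w x) * owalk θ0 θ1 p t (x+(-1)) 1 1) := by
        refine Finset.sum_congr rfl fun x _ => ?_
        rw [entry00 θ0 θ1 p hs t x]
        have : x + (-1) = x - 1 := by ring
        rw [this]; ring
    _ = (∑ x ∈ Finset.Icc (-(t:ℤ)-1) ((t:ℤ)+1), (fun y => a^2 * w y) x * owalk θ0 θ1 p t (x+1) 1 1)
        + ∑ x ∈ Finset.Icc (-(t:ℤ)-1) ((t:ℤ)+1), (fun y => b^2 * w y) x * owalk θ0 θ1 p t (x+(-1)) 1 1 := by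
        rw [Finset.sum_add_distrib]
    _ = (∑ x ∈ Finset.Icc (-(t:ℤ)) (t:ℤ), (a^2 * w (x-1)) * owalk θ0 θ1 p t x 1 1)
        + ∑ x ∈ Finset.Icc (-(t:ℤ)) (t:ℤ), (b^2 * w (x-(-1))) * owalk θ0 θ1 p t x 1 1 := by
        rw [sum_shift t _ (vanish00 θ0 θ1 p t) _ 1 (by norm_num) (by norm_num),
            sum_shift t _ (vanish00 θ0 θ1 p t) _ (-1) (by norm_num) (by norm_num)]
    _ = _ := by
        rw [← Finset.sum_add_distrib]
        refine Finset.sum_congr rfl fun x _ => ?_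
        have : x - (-1) = x + 1 := by ring
        rw [this]; ring

lemma sum_rec11 (θ0 θ1 p : ℝ) (hs : Real.sin θ0 * Real.cos θ1 = 0) (t : ℕ) (w : ℤ → ℂ) :
    ∑ x ∈ Finset.Icc (-(t:ℤ)-1) ((t:ℤ)+1), w x * owalk θ0 θ1 p (t+1) x 1 1
      = ∑ x ∈ Finset.Icc (-(t:ℤ)) (t:ℤ),
          (((Real.sin θ0 * Real.sin θ1 : ℝ) : ℂ)^2 * w (x-1) + (Real.cos θ0 : ℂ)^2 * w (x+1))
            * owalk θ0 θ1 p t x 0 0 := by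
  set a : ℂ := (Real.cos θ0 : ℂ)
  set b : ℂ := ((Real.sin θ0 * Real.sin θ1 : ℝ) : ℂ)
  calc ∑ x ∈ Finset.Icc (-(t:ℤ)-1) ((t:ℤ)+1), w x * owalk θ0 θ1 p (t+1) x 1 1
      = ∑ x ∈ Finset.Icc (-(t:ℤ)-1) ((t:ℤ)+1),
          ((b^2 * w x) * owalk θ0 θ1 p t (x+1) 0 0 + (a^2 * w x) * owalk θ0 θ1 p t (x+(-1)) 0 0) := by
        refine Finset.sum_congr rfl fun x _ => ?_
        rw [entry11 θ0 θ1 p hs t x]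
        have : x + (-1) = x - 1 := by ring
        rw [this]; ring
    _ = (∑ x ∈ Finset.Icc (-(t:ℤ)-1) ((t:ℤ)+1), (fun y => b^2 * w y) x * owalk θ0 θ1 p t (x+1) 0 0)
        + ∑ x ∈ Finset.Icc (-(t:ℤ)-1) ((t:ℤ)+1), (fun y => a^2 * w y) x * owalk θ0 θ1 p t (x+(-1)) 0 0 := by
        rw [Finset.sum_add_distrib]
    _ = (∑ x ∈ Finset.Icc (-(t:ℤ)) (t:ℤ), (b^2 * w (x-1)) * owalk θ0 θ1 p t x 0 0)
        + ∑ x ∈ Finset.Icc (-(t:ℤ)) (t:ℤ), (a^2 * w (x-(-1))) * owalk θ0 θ1 p t x 0 0 := by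
        rw [sum_shift t _ (vanish11 θ0 θ1 p t) _ 1 (by norm_num) (by norm_num),
            sum_shift t _ (vanish11 θ0 θ1 p t) _ (-1) (by norm_num) (by norm_num)]
    _ = _ := by
        rw [← Finset.sum_add_distrib]
        refine Finset.sum_congr rfl fun x _ => ?_
        have : x - (-1) = x + 1 := by ring
        rw [this]; ring

lemma hab_real (θ0 θ1 : ℝ) (hs : Real.sin θ0 * Real.cos θ1 = 0) :
    Real.cos θ0 ^ 2 + (Real.sin θ0 * Real.sin θ1) ^ 2 = 1 := by
  have h2 : (Real.sin θ0 * Real.cos θ1)^2 = 0 := by rw [hs]; ring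
  nlinarith [Real.sin_sq_add_cos_sq θ0, Real.sin_sq_add_cos_sq θ1]

lemma hd_real (θ0 θ1 : ℝ) (hs : Real.sin θ0 * Real.cos θ1 = 0) :
    Real.cos θ0 ^ 2 - (Real.sin θ0 * Real.sin θ1) ^ 2 = 2 * Real.cos θ0 ^ 2 - 1 := by
  have h2 : (Real.sin θ0 * Real.cos θ1)^2 = 0 := by rw [hs]; ring
  nlinarith [Real.sin_sq_add_cos_sq θ0, Real.sin_sq_add_cos_sq θ1]

lemma Ssum_succ (θ0 θ1 p : ℝ) (k t : ℕ) :
    Ssum θ0 θ1 p k (t+1)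
      = (∑ x ∈ Finset.Icc (-(t:ℤ)-1) ((t:ℤ)+1), (x:ℂ)^k * owalk θ0 θ1 p (t+1) x 0 0)
        + ∑ x ∈ Finset.Icc (-(t:ℤ)-1) ((t:ℤ)+1), (x:ℂ)^k * owalk θ0 θ1 p (t+1) x 1 1 := by
  simp only [Ssum]
  rw [show (((t+1:ℕ)):ℤ) = (t:ℤ)+1 by push_cast; ring,
      show -((t:ℤ)+1) = -(t:ℤ)-1 by ring, ← Finset.sum_add_distrib]
  exact Finset.sum_congr rfl fun x _ => by ring

lemma Dsum_succ (θ0 θ1 p : ℝ) (k t : ℕ) :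
    Dsum θ0 θ1 p k (t+1)
      = (∑ x ∈ Finset.Icc (-(t:ℤ)-1) ((t:ℤ)+1), (x:ℂ)^k * owalk θ0 θ1 p (t+1) x 0 0)
        - ∑ x ∈ Finset.Icc (-(t:ℤ)-1) ((t:ℤ)+1), (x:ℂ)^k * owalk θ0 θ1 p (t+1) x 1 1 := by
  simp only [Dsum]
  rw [show (((t+1:ℕ)):ℤ) = (t:ℤ)+1 by push_cast; ring,
      show -((t:ℤ)+1) = -(t:ℤ)-1 by ring, ← Finset.sum_sub_distrib]
  exact Finset.sum_congr rfl fun x _ => by ring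

lemma S0_rec (θ0 θ1 p : ℝ) (hs : Real.sin θ0 * Real.cos θ1 = 0) (t : ℕ) :
    Ssum θ0 θ1 p 0 (t+1) = Ssum θ0 θ1 p 0 t := by
  have hab : (Real.cos θ0 : ℂ)^2 + ((Real.sin θ0 * Real.sin θ1 : ℝ) : ℂ)^2 = 1 := by
    exact_mod_cast hab_real θ0 θ1 hs
  rw [Ssum_succ,
      sum_rec00 θ0 θ1 p hs t (fun y => (y:ℂ)^0),
      sum_rec11 θ0 θ1 p hs t (fun y => (y:ℂ)^0)]
  simp only [Ssum, ← Finset.sum_add_distrib]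
  refine Finset.sum_congr rfl fun x _ => ?_
  push_cast [Complex.ofReal_cos, Complex.ofReal_sin] at hab ⊢
  linear_combination (owalk θ0 θ1 p t x 1 1 + owalk θ0 θ1 p t x 0 0) * hab

lemma D1_rec (θ0 θ1 p : ℝ) (hs : Real.sin θ0 * Real.cos θ1 = 0) (t : ℕ) :
    Dsum θ0 θ1 p 1 (t+1)
      = -Dsum θ0 θ1 p 1 t
        - ((Real.cos θ0 : ℂ)^2 - ((Real.sin θ0 * Real.sin θ1 : ℝ) : ℂ)^2) * Ssum θ0 θ1 p 0 t := by
  have hab : (Real.cos θ0 : ℂ)^2 + ((Real.sin θ0 * Real.sin θ1 : ℝ) : ℂ)^2 = 1 := by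
    exact_mod_cast hab_real θ0 θ1 hs
  rw [Dsum_succ,
      sum_rec00 θ0 θ1 p hs t (fun y => (y:ℂ)^1),
      sum_rec11 θ0 θ1 p hs t (fun y => (y:ℂ)^1)]
  simp only [Ssum, Dsum, Finset.mul_sum, ← Finset.sum_neg_distrib]
  rw [← Finset.sum_sub_distrib, ← Finset.sum_sub_distrib]
  refine Finset.sum_congr rfl fun x _ => ?_
  push_cast [Complex.ofReal_cos, Complex.ofReal_sin] at hab ⊢
  linear_combination ((x:ℂ) * owalk θ0 θ1 p t x 1 1 - (x:ℂ) * owalk θ0 θ1 p t x 0 0) * hab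

lemma S2_rec (θ0 θ1 p : ℝ) (hs : Real.sin θ0 * Real.cos θ1 = 0) (t : ℕ) :
    Ssum θ0 θ1 p 2 (t+1)
      = Ssum θ0 θ1 p 2 t
        + 2 * ((Real.cos θ0 : ℂ)^2 - ((Real.sin θ0 * Real.sin θ1 : ℝ) : ℂ)^2) * Dsum θ0 θ1 p 1 t
        + Ssum θ0 θ1 p 0 t := by
  have hab : (Real.cos θ0 : ℂ)^2 + ((Real.sin θ0 * Real.sin θ1 : ℝ) : ℂ)^2 = 1 := by
    exact_mod_cast hab_real θ0 θ1 hs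
  rw [Ssum_succ,
      sum_rec00 θ0 θ1 p hs t (fun y => (y:ℂ)^2),
      sum_rec11 θ0 θ1 p hs t (fun y => (y:ℂ)^2)]
  simp only [Ssum, Dsum, Finset.mul_sum]
  rw [← Finset.sum_add_distrib, ← Finset.sum_add_distrib, ← Finset.sum_add_distrib]
  refine Finset.sum_congr rfl fun x _ => ?_
  push_cast [Complex.ofReal_cos, Complex.ofReal_sin] at hab ⊢
  linear_combination (((x:ℂ)^2 + 1) * (owalk θ0 θ1 p t x 1 1 + owalk θ0 θ1 p t x 0 0)) * hab

lemma Ssum0_zero (θ0 θ1 p : ℝ) : Ssum θ0 θ1 p 0 0 = 1 := by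
  simp [Ssum, owalk, Matrix.diagonal]

lemma Dsum1_zero (θ0 θ1 p : ℝ) : Dsum θ0 θ1 p 1 0 = 0 := by
  simp [Dsum]

lemma Ssum2_zero (θ0 θ1 p : ℝ) : Ssum θ0 θ1 p 2 0 = 0 := by
  simp [Ssum]

lemma key (θ0 θ1 p : ℝ) (hs : Real.sin θ0 * Real.cos θ1 = 0) : ∀ t : ℕ,
    Ssum θ0 θ1 p 0 t = 1 ∧
    Dsum θ0 θ1 p 1 t = (((if Even t then 0 else -(2*Real.cos θ0^2-1)) : ℝ) : ℂ) ∧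
    Ssum θ0 θ1 p 2 t
      = (((4*Real.cos θ0^2*Real.sin θ0^2*t
          + (if Even t then 0 else (2*Real.cos θ0^2-1)^2)) : ℝ) : ℂ) := by
  have hdC : (Real.cos θ0 : ℂ)^2 - ((Real.sin θ0*Real.sin θ1 : ℝ):ℂ)^2
      = ((2*Real.cos θ0^2 - 1 : ℝ) : ℂ) := by
    exact_mod_cast hd_real θ0 θ1 hs
  have hA : 4*Real.cos θ0^2*Real.sin θ0^2 + (2*Real.cos θ0^2-1)^2 = 1 := by
    nlinarith [Real.sin_sq_add_cos_sq θ0]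
  have hAC : ((4*Real.cos θ0^2*Real.sin θ0^2 : ℝ) : ℂ) + ((2*Real.cos θ0^2-1 : ℝ) : ℂ)^2 = 1 := by
    exact_mod_cast hA
  intro t
  induction t with
  | zero =>
      refine ⟨Ssum0_zero θ0 θ1 p, ?_, ?_⟩ <;> simp [Dsum1_zero, Ssum2_zero]
  | succ t ih =>
      obtain ⟨h0, h1, h2⟩ := ih
      refine ⟨by rw [S0_rec θ0 θ1 p hs t, h0], ?_, ?_⟩
      · rw [D1_rec θ0 θ1 p hs t, h1, h0, hdC]
        rcases Nat.even_or_odd t with he | ho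
        · rw [if_pos he, if_neg (Nat.not_even_iff_odd.mpr he.add_one)]
          push_cast; ring
        · rw [if_neg (Nat.not_even_iff_odd.mpr ho),
              if_pos ho.add_one]
          push_cast; ring
      · rw [S2_rec θ0 θ1 p hs t, h2, h1, h0, hdC]
        rcases Nat.even_or_odd t with he | ho
        · rw [if_pos he, if_pos he, if_neg (Nat.not_even_iff_odd.mpr he.add_one)]
          have hP := Real.sin_sq_add_cos_sq θ0
          push_cast
          norm_cast
          push_cast
          linear_combination (-4 * Complex.cos (θ0:ℂ) ^ 2) * Complex.sin_sq_add_cos_sq (θ0:ℂ)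
        · have hne : ¬ Even t := Nat.not_even_iff_odd.mpr ho
          rw [if_neg hne, if_neg hne, if_pos ho.add_one]
          have hP := Real.sin_sq_add_cos_sq θ0
          push_cast
          norm_cast
          push_cast
          linear_combination (-4 * Complex.cos (θ0:ℂ) ^ 2) * Complex.sin_sq_add_cos_sq (θ0:ℂ)


lemma moment2_eq_s8 (θ0 θ1 p : ℝ) (t : ℕ) :
    moment2 θ0 θ1 p t = (Ssum θ0 θ1 p 2 t).re := by
  rw [moment2, Ssum, Complex.re_sum]
  refine Finset.sum_congr rfl fun x _ => ?_
  rw [findprob, Matrix.trace_fin_two]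
  rw [show ((x:ℤ):ℂ)^2 = (((x:ℝ)^2 : ℝ) : ℂ) by push_cast; ring, Complex.re_ofReal_mul]

theorem owalk_moment2_parity (θ0 θ1 p : ℝ) (hp0 : 0 ≤ p) (hp1 : p ≤ 1)
    (hs : Real.sin θ0 * Real.cos θ1 = 0)
    (hne : Real.cos θ0 ≠ Real.sin θ0 * Real.sin θ1) :
    ∀ t : ℕ,
      (Even t → moment2 θ0 θ1 p t = 4 * Real.cos θ0 ^ 2 * Real.sin θ0 ^ 2 * t) ∧
      (Odd t → moment2 θ0 θ1 p t =
        4 * Real.cos θ0 ^ 2 * Real.sin θ0 ^ 2 * t + (2 * Real.cos θ0 ^ 2 - 1) ^ 2) := by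
  intro t
  have h := (key θ0 θ1 p hs t).2.2
  constructor
  · intro he
    rw [moment2_eq_s8, h, if_pos he, Complex.ofReal_re]
    ring
  · intro ho
    rw [moment2_eq_s8, h, if_neg (Nat.not_even_iff_odd.mpr ho), Complex.ofReal_re]
end
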